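/- Let n and k be natural numbers with k ≤ n, and let p be real with q = 1 − p. Then Σ_{i=0}^{k} i·(choose n i)·p^i·q^(n−i) = n·p·(Σ_{i=0}^{k} (choose n i)·p^i·q^(n−i)) − (n−k)·p·(choose n k)·p^k·q^(n−k). -/
import Mathlib


/-- truncated first-moment identity for binomial weights. -/
theorem dave_truncated_first_moment
    (n k : ℕ) (hkn : k ≤ n) (p q : ℝ) (hq : q = 1 - p) :
    ∑ i ∈ Finset.range (k + 1),
        (i : ℝ) * (Nat.choose n i : ℝ) * p ^ i * q ^ (n - i)
      = (n : ℝ) * p * (∑ i ∈ Finset.range (k + 1),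
          (Nat.choose n i : ℝ) * p ^ i * q ^ (n - i))
        - ((n : ℝ) - (k : ℝ)) * p * (Nat.choose n k : ℝ) * p ^ k * q ^ (n - k) := by
  induction k with
  | zero =>
    simp
  | succ k ih =>
    have hk : k ≤ n := Nat.le_of_succ_le hkn
    conv_rhs => rw [Finset.sum_range_succ]
    rw [Finset.sum_range_succ, ih hk]
    have hch : ((Nat.choose n k : ℝ)) * ((n : ℝ) - (k : ℝ))
        = (Nat.choose n (k + 1) : ℝ) * ((k : ℝ) + 1) := by
      have := Nat.choose_succ_right_eq n k
      have h1 : ((n - k : ℕ) : ℝ) = (n : ℝ) - (k : ℝ) := by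
        rw [Nat.cast_sub hk]
      calc ((Nat.choose n k : ℝ)) * ((n : ℝ) - (k : ℝ))
          = ((Nat.choose n k * (n - k) : ℕ) : ℝ) := by push_cast [h1]; ring
        _ = ((Nat.choose n (k + 1) * (k + 1) : ℕ) : ℝ) := by rw [← this]
        _ = (Nat.choose n (k + 1) : ℝ) * ((k : ℝ) + 1) := by push_cast; ring
    have hq' : q ^ (n - k) = q * q ^ (n - (k + 1)) := by
      rw [← pow_succ']
      congr 1
      omega
    rw [hq', hq]
    push_cast
    linear_combination (-(p ^ (k + 1) * (1 - p) ^ (n - (k + 1)) * (1 - p))) * hch
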